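/- arXiv:quant-ph/0401026 — 2 statements merged into one kernel-verified Lean document; each statement's English description precedes it below -/
import Mathlib

section
/- Let Φ : M_d(ℂ) → M_{d'}(ℂ) be a completely positive linear map such that every entry of every matrix Φ(E_{jk}) is a nonnegative real number (equivalently, the Choi matrix of Φ has nonnegative real entries). Then Tr Φ(E_{ik})† Φ(E_{jℓ}) ≥ 0 for all indices i, j, k, ℓ, and consequently ν₂(Φ ⊗ Ω) = ν₂(Φ) · ν₂(Ω) for every completely positive map Ω. -/
open scoped Kronecker ComplexOrder
open Matrix

/-- Frobenius (Hilbert–Schmidt) norm ‖A‖₂ = (Tr A†A)^{1/2}. -/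
noncomputable def frob {m n : Type*} [Fintype m] [Fintype n] (A : Matrix m n ℂ) : ℝ :=
  Real.sqrt ((Aᴴ * A).trace.re)

/-- ‖Φ‖_{2→2} = sup_{A ≠ 0} ‖Φ(A)‖₂ / ‖A‖₂. -/
noncomputable def norm22 {m m' : Type*} [Fintype m] [Fintype m']
    (Φ : Matrix m m ℂ →ₗ[ℂ] Matrix m' m' ℂ) : ℝ :=
  sSup {r | ∃ A, A ≠ 0 ∧ r = frob (Φ A) / frob A}

/-- Choi matrix ∑_{j,k} E_{jk} ⊗ Φ(E_{jk}) of a linear map between matrix algebras. -/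
noncomputable def choi {m m' : Type*} [Fintype m] [DecidableEq m] [Fintype m']
    (Φ : Matrix m m ℂ →ₗ[ℂ] Matrix m' m' ℂ) : Matrix (m × m') (m × m') ℂ :=
  ∑ j, ∑ k, (single j k (1 : ℂ)) ⊗ₖ Φ (single j k 1)

/-- A linear map between matrix algebras is completely positive iff its Choi matrix is
positive semidefinite. -/
def IsCPMap {m m' : Type*} [Fintype m] [DecidableEq m] [Fintype m']
    (Φ : Matrix m m ℂ →ₗ[ℂ] Matrix m' m' ℂ) : Prop :=
  (choi Φ).PosSemidef

/-- Schatten p-norm ‖A‖_p = (Tr |A|^p)^{1/p}, computed through the singular values of A,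
i.e. the square roots of the eigenvalues of A†A. -/
noncomputable def schatten {m n : Type*} [Fintype m] [Fintype n] [DecidableEq n]
    (p : ℝ) (A : Matrix m n ℂ) : ℝ :=
  (∑ i, Real.sqrt ((isHermitian_conjTranspose_mul_self A).eigenvalues i) ^ p) ^ (1 / p)

/-- ν₂(Φ) = sup { ‖Φ(ρ)‖₂ : ρ positive semidefinite, Tr ρ = 1 }. -/
noncomputable def nu2 {m m' : Type*} [Fintype m] [Fintype m']
    (Φ : Matrix m m ℂ →ₗ[ℂ] Matrix m' m' ℂ) : ℝ :=
  sSup {r | ∃ ρ : Matrix m m ℂ, ρ.PosSemidef ∧ ρ.trace = 1 ∧ r = frob (Φ ρ)}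

/-- ν_p(Φ) = sup { ‖Φ(ρ)‖_p : ρ positive semidefinite, Tr ρ = 1 }. -/
noncomputable def nup (p : ℝ) {m m' : Type*} [Fintype m] [Fintype m'] [DecidableEq m']
    (Φ : Matrix m m ℂ →ₗ[ℂ] Matrix m' m' ℂ) : ℝ :=
  sSup {r | ∃ ρ : Matrix m m ℂ, ρ.PosSemidef ∧ ρ.trace = 1 ∧ r = schatten p (Φ ρ)}

/-- The Pauli matrices σ₁, σ₂, σ₃ (indexed by `Fin 3`). -/
noncomputable def pauli : Fin 3 → Matrix (Fin 2) (Fin 2) ℂ :=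
  ![!![0, 1; 1, 0], !![0, -Complex.I; Complex.I, 0], !![1, 0; 0, -1]]


set_option linter.unusedSectionVars false
set_option maxHeartbeats 1000000
open scoped InnerProductSpace
open Finset

open scoped MatrixOrder in
theorem Matrix.posSemidef_iff_eq_transpose_mul_self {n : Type*} [Fintype n] [DecidableEq n]
    {A : Matrix n n ℂ} : A.PosSemidef ↔ ∃ B : Matrix n n ℂ, A = Bᴴ * B := by
  constructor
  · intro h
    obtain ⟨B, hB⟩ := CStarAlgebra.nonneg_iff_eq_star_mul_self.mp h.nonneg
    exact ⟨B, hB⟩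
  · rintro ⟨B, rfl⟩
    exact posSemidef_conjTranspose_mul_self B

section helpers
variable {m n p : Type*} [Fintype m] [Fintype n] [Fintype p]

lemma trace_ctm (A B : Matrix m n ℂ) :
    (Aᴴ * B).trace = ∑ q : m × n, (starRingEnd ℂ) (A q.1 q.2) * B q.1 q.2 := by
  rw [Fintype.sum_prod_type, Matrix.trace]
  simp only [Matrix.mul_apply, Matrix.diag, Matrix.conjTranspose_apply, RCLike.star_def]
  rw [Finset.sum_comm]

noncomputable def mE (A : Matrix m n ℂ) : EuclideanSpace ℂ (m × n) := WithLp.toLp 2 fun q => A q.1 q.2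

lemma inner_mE (A B : Matrix m n ℂ) : ⟪mE A, mE B⟫_ℂ = (Aᴴ * B).trace := by
  rw [trace_ctm]
  simp [mE, PiLp.inner_apply, mul_comm]

lemma frob_eq_norm (A : Matrix m n ℂ) : frob A = ‖mE A‖ := by
  rw [frob, EuclideanSpace.norm_eq]
  congr 1
  have := inner_mE A A
  have h2 : ((Aᴴ * A).trace).re = ‖mE A‖^2 := by
    rw [← this, ← inner_self_eq_norm_sq (𝕜 := ℂ)]
    simp
  rw [h2, EuclideanSpace.norm_eq]
  rw [Real.sq_sqrt]
  positivity

lemma mE_add (A B : Matrix m n ℂ) : mE (A + B) = mE A + mE B := rfl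
lemma mE_smul (c : ℂ) (A : Matrix m n ℂ) : mE (c • A) = c • mE A := rfl
lemma mE_sum {ι : Type*} (s : Finset ι) (f : ι → Matrix m n ℂ) :
    mE (∑ i ∈ s, f i) = ∑ i ∈ s, mE (f i) := by
  induction s using Finset.cons_induction with
  | empty => rfl
  | cons a s ha ih => rw [Finset.sum_cons, Finset.sum_cons, ← ih]; rfl

lemma frob_nonneg (A : Matrix m n ℂ) : 0 ≤ frob A := Real.sqrt_nonneg _

lemma frob_sq (A : Matrix m n ℂ) : frob A ^ 2 = ((Aᴴ * A).trace).re := by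
  rw [frob_eq_norm, ← inner_self_eq_norm_sq (𝕜 := ℂ), inner_mE]
  rfl

lemma frob_smul (c : ℂ) (A : Matrix m n ℂ) : frob (c • A) = ‖c‖ * frob A := by
  rw [frob_eq_norm, frob_eq_norm, mE_smul, norm_smul]

lemma cs_trace (A B : Matrix m n ℂ) : ‖(Aᴴ * B).trace‖ ≤ frob A * frob B := by
  rw [← inner_mE, frob_eq_norm, frob_eq_norm]
  exact norm_inner_le_norm _ _

lemma trace_ctm_self (A : Matrix m n ℂ) :
    (Aᴴ * A).trace = ((frob A ^ 2 : ℝ) : ℂ) := by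
  have h := frob_sq A
  have him : ((Aᴴ * A).trace).im = 0 := by
    rw [trace_ctm]
    simp [Complex.im_sum, mul_comm, Complex.mul_conj]
  apply Complex.ext <;> simp [h, him]

lemma frob_aat (X : Matrix p m ℂ) : frob (X * Xᴴ) = frob (Xᴴ * X) := by
  unfold frob
  congr 2
  rw [conjTranspose_mul, conjTranspose_conjTranspose, conjTranspose_mul,
    conjTranspose_conjTranspose]
  rw [Matrix.mul_assoc, Matrix.trace_mul_comm, Matrix.mul_assoc, Matrix.mul_assoc,
    ← Matrix.mul_assoc]

lemma gram_cs (X : Matrix p m ℂ) (Y : Matrix p n ℂ) :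
    frob (Xᴴ * Y) ^ 2 ≤ frob (Xᴴ * X) * frob (Yᴴ * Y) := by
  have h1 : frob (Xᴴ * Y) ^ 2 = (((X * Xᴴ)ᴴ * (Y * Yᴴ)).trace).re := by
    rw [frob_sq]
    congr 1
    rw [conjTranspose_mul, conjTranspose_conjTranspose, conjTranspose_mul,
      conjTranspose_conjTranspose]
    rw [Matrix.mul_assoc, Matrix.trace_mul_comm, Matrix.mul_assoc, Matrix.mul_assoc,
      Matrix.mul_assoc]
  rw [h1, ← frob_aat X, ← frob_aat Y]
  calc (((X * Xᴴ)ᴴ * (Y * Yᴴ)).trace).re ≤ ‖((X * Xᴴ)ᴴ * (Y * Yᴴ)).trace‖ :=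
        Complex.re_le_norm _
    _ ≤ frob (X * Xᴴ) * frob (Y * Yᴴ) := cs_trace _ _

lemma kron_conjT {m' n' : Type*} (A : Matrix m n ℂ) (B : Matrix m' n' ℂ) :
    (A ⊗ₖ B)ᴴ = Aᴴ ⊗ₖ Bᴴ := by
  ext ⟨i, a⟩ ⟨j, b⟩
  simp [conjTranspose_apply, Matrix.kroneckerMap_apply, star_mul']

lemma frob_kron {m' n' : Type*} [Fintype m'] [Fintype n'] (A : Matrix m n ℂ)
    (B : Matrix m' n' ℂ) : frob (A ⊗ₖ B) = frob A * frob B := by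
  unfold frob
  rw [kron_conjT, ← Matrix.mul_kronecker_mul, Matrix.trace_kronecker, trace_ctm_self,
    trace_ctm_self, ← Complex.ofReal_mul, Complex.ofReal_re]
  simp only [Complex.ofReal_re]
  rw [Real.sqrt_mul (by positivity), Real.sqrt_sq (frob_nonneg _), Real.sqrt_sq (frob_nonneg _)]

lemma trace_expand_sum {ι : Type*} [Fintype ι] (M : ι → Matrix m n ℂ) :
    ((∑ q, M q)ᴴ * (∑ r, M r)).trace = ∑ q, ∑ r, ((M q)ᴴ * M r).trace := by
  rw [conjTranspose_sum, Matrix.sum_mul]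
  simp [Matrix.mul_sum, Matrix.trace_sum]

lemma choi_apply {mm mm' : Type*} [Fintype mm] [DecidableEq mm] [Fintype mm']
    (Θ : Matrix mm mm ℂ →ₗ[ℂ] Matrix mm' mm' ℂ) (a c : mm) (b b' : mm') :
    (∑ j, ∑ k, (single j k (1 : ℂ)) ⊗ₖ Θ (single j k 1)) (a, b) (c, b')
      = Θ (single a c 1) b b' := by
  simp only [Matrix.sum_apply, Matrix.kroneckerMap_apply]
  rw [Finset.sum_eq_single a]
  · rw [Finset.sum_eq_single c]
    · simp [Matrix.single]
    · intro k _ hk; simp [Matrix.single, hk]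
    · simp
  · intro j _ hj
    apply Finset.sum_eq_zero
    intro k _
    simp [Matrix.single, hj]
  · simp

lemma map_expand {mm mm' : Type*} [Fintype mm] [DecidableEq mm] [Fintype mm']
    (Θ : Matrix mm mm ℂ →ₗ[ℂ] Matrix mm' mm' ℂ) (B : Matrix mm mm ℂ) :
    Θ B = ∑ q : mm × mm, B q.1 q.2 • Θ (single q.1 q.2 1) := by
  conv_lhs => rw [matrix_eq_sum_single B]
  rw [← Fintype.sum_prod_type']
  rw [map_sum]
  congr 1
  ext q : 1
  have h : single q.1 q.2 (B q.1 q.2) = B q.1 q.2 • single q.1 q.2 (1 : ℂ) := by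
    rw [smul_single, smul_eq_mul, mul_one]
  rw [h, _root_.map_smul]

noncomputable def colE (B : Matrix m n ℂ) (j : n) : EuclideanSpace ℂ m := WithLp.toLp 2 fun t => B t j

lemma inner_colE (B : Matrix m n ℂ) (i k : n) :
    ⟪colE B i, colE B k⟫_ℂ = (Bᴴ * B) i k := by
  simp [colE, PiLp.inner_apply, Matrix.mul_apply, Matrix.conjTranspose_apply, mul_comm]

lemma norm_colE_sq (B : Matrix m n ℂ) (i : n) :
    ‖colE B i‖ ^ 2 = ((Bᴴ * B) i i).re := by
  rw [← inner_colE, ← inner_self_eq_norm_sq (𝕜 := ℂ)]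
  rfl

lemma entry_bound (B : Matrix m n ℂ) (h1 : (Bᴴ * B).trace = 1) (i k : n) :
    ‖(Bᴴ * B) i k‖ ≤ 1 := by
  have hsum : ∑ j, ‖colE B j‖ ^ 2 = 1 := by
    have : (Bᴴ * B).trace.re = 1 := by rw [h1]; simp
    rw [← this, Matrix.trace]
    simp only [norm_colE_sq, Matrix.diag]
    rw [Complex.re_sum]
  have hle : ∀ j, ‖colE B j‖ ≤ 1 := by
    intro j
    have h2 : ‖colE B j‖ ^ 2 ≤ 1 := by
      rw [← hsum]
      exact Finset.single_le_sum (f := fun j => ‖colE B j‖ ^ 2)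
        (fun j _ => by positivity) (Finset.mem_univ j)
    nlinarith [norm_nonneg (colE B j)]
  calc ‖(Bᴴ * B) i k‖ = ‖⟪colE B i, colE B k⟫_ℂ‖ := by rw [inner_colE]
    _ ≤ ‖colE B i‖ * ‖colE B k‖ := norm_inner_le_norm _ _
    _ ≤ 1 * 1 := by
        exact mul_le_mul (hle i) (hle k) (norm_nonneg _) zero_le_one
    _ = 1 := mul_one 1

lemma frob_sum_le {ι : Type*} (s : Finset ι) (f : ι → Matrix m n ℂ) :
    frob (∑ i ∈ s, f i) ≤ ∑ i ∈ s, frob (f i) := by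
  simp only [frob_eq_norm, mE_sum]
  exact norm_sum_le s _

lemma nu2_set_bdd {mm mm' : Type*} [Fintype mm] [DecidableEq mm] [Fintype mm']
    (Θ : Matrix mm mm ℂ →ₗ[ℂ] Matrix mm' mm' ℂ) :
    ∀ r ∈ {r | ∃ ρ : Matrix mm mm ℂ, ρ.PosSemidef ∧ ρ.trace = 1 ∧ r = frob (Θ ρ)},
      r ≤ ∑ q : mm × mm, frob (Θ (single q.1 q.2 1)) := by
  rintro r ⟨ρ, hρ, htr, rfl⟩
  obtain ⟨B, rfl⟩ := Matrix.posSemidef_iff_eq_transpose_mul_self.mp hρ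
  rw [map_expand Θ]
  refine le_trans (frob_sum_le _ _) (Finset.sum_le_sum fun q _ => ?_)
  rw [frob_smul]
  calc ‖(Bᴴ * B) q.1 q.2‖ * frob (Θ (single q.1 q.2 1))
      ≤ 1 * frob (Θ (single q.1 q.2 1)) :=
        mul_le_mul_of_nonneg_right (entry_bound B htr q.1 q.2) (frob_nonneg _)
    _ = _ := one_mul _

lemma frob_zero : frob (0 : Matrix m n ℂ) = 0 := by simp [frob]

lemma nu2_bddAbove {mm mm' : Type*} [Fintype mm] [DecidableEq mm] [Fintype mm']
    (Θ : Matrix mm mm ℂ →ₗ[ℂ] Matrix mm' mm' ℂ) :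
    BddAbove {r | ∃ ρ : Matrix mm mm ℂ, ρ.PosSemidef ∧ ρ.trace = 1 ∧ r = frob (Θ ρ)} :=
  ⟨_, nu2_set_bdd Θ⟩

lemma nu2_nonneg {mm mm' : Type*} [Fintype mm] [DecidableEq mm] [Fintype mm']
    (Θ : Matrix mm mm ℂ →ₗ[ℂ] Matrix mm' mm' ℂ) : 0 ≤ nu2 Θ := by
  rcases Set.eq_empty_or_nonempty
    {r | ∃ ρ : Matrix mm mm ℂ, ρ.PosSemidef ∧ ρ.trace = 1 ∧ r = frob (Θ ρ)} with h | h
  · rw [nu2, h, Real.sSup_empty]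
  · obtain ⟨r, hr⟩ := h
    refine le_trans ?_ (le_csSup (nu2_bddAbove Θ) hr)
    obtain ⟨ρ, _, _, rfl⟩ := hr
    exact frob_nonneg _

lemma frob_le_nu2 {mm mm' : Type*} [Fintype mm] [DecidableEq mm] [Fintype mm']
    (Θ : Matrix mm mm ℂ →ₗ[ℂ] Matrix mm' mm' ℂ) (τ : Matrix mm mm ℂ) (hτ : τ.PosSemidef) :
    frob (Θ τ) ≤ nu2 Θ * τ.trace.re := by
  obtain ⟨B, rfl⟩ := Matrix.posSemidef_iff_eq_transpose_mul_self.mp hτ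
  have htr : (Bᴴ * B).trace = ((frob B ^ 2 : ℝ) : ℂ) := trace_ctm_self B
  set t : ℝ := frob B ^ 2 with ht
  have htre : (Bᴴ * B).trace.re = t := by rw [htr]; simp
  rcases eq_or_lt_of_le (by positivity : (0:ℝ) ≤ t) with h0 | hpos
  · have hB : B = 0 := by
      have : ‖mE B‖ = 0 := by
        have := frob_eq_norm B
        nlinarith [norm_nonneg (mE B)]
      have hm : mE B = 0 := norm_eq_zero.mp this
      ext i j
      have := congrArg (fun v => v (i, j)) hm
      simpa [mE] using this
    rw [hB]
    simp [frob_zero]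
  · set c : ℂ := (((Real.sqrt t)⁻¹ : ℝ) : ℂ) with hc
    set ρ : Matrix mm mm ℂ := (c • B)ᴴ * (c • B) with hρdef
    have hct : star c * c = ((t⁻¹ : ℝ) : ℂ) := by
      rw [hc, Complex.star_def]
      rw [Complex.conj_ofReal, ← Complex.ofReal_mul]
      congr 1
      rw [← Real.sqrt_inv]
      exact Real.mul_self_sqrt (by positivity)
    have hρ : ρ = ((t⁻¹ : ℝ) : ℂ) • (Bᴴ * B) := by
      rw [hρdef, conjTranspose_smul, Matrix.smul_mul, Matrix.mul_smul, smul_smul, hct]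
    have hρtr : ρ.trace = 1 := by
      rw [hρ, Matrix.trace_smul, htr, smul_eq_mul, ← Complex.ofReal_mul,
        inv_mul_cancel₀ (ne_of_gt hpos)]
      simp
    have hmem : frob (Θ ρ) ∈
        {r | ∃ σ : Matrix mm mm ℂ, σ.PosSemidef ∧ σ.trace = 1 ∧ r = frob (Θ σ)} :=
      ⟨ρ, Matrix.posSemidef_iff_eq_transpose_mul_self.mpr ⟨c • B, rfl⟩, hρtr, rfl⟩
    have hle : frob (Θ ρ) ≤ nu2 Θ := le_csSup (nu2_bddAbove Θ) hmem
    have hfr : frob (Θ ρ) = t⁻¹ * frob (Θ (Bᴴ * B)) := by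
      rw [hρ, _root_.map_smul, frob_smul]
      congr 1
      rw [Complex.norm_real, Real.norm_eq_abs]
      exact abs_of_nonneg (inv_nonneg.mpr (le_of_lt hpos))
    rw [htre]
    rw [hfr] at hle
    have := mul_le_mul_of_nonneg_right hle (le_of_lt hpos)
    calc frob (Θ (Bᴴ * B)) = t⁻¹ * frob (Θ (Bᴴ * B)) * t := by
          field_simp
      _ ≤ nu2 Θ * t := this

lemma sum4 {α β γ δ : Type*} [Fintype α] [Fintype β] [Fintype γ] [Fintype δ]
    (f : α → γ → ℂ) (g : β → γ → ℂ) (u : α → δ → ℂ) (v : β → δ → ℂ) :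
    ∑ a : α, ∑ c : β, (∑ t : γ, f a t * g c t) * (∑ s : δ, u a s * v c s)
      = ∑ t : γ, ∑ s : δ, (∑ a : α, f a t * u a s) * (∑ c : β, g c t * v c s) := by
  simp only [Finset.sum_mul_sum]
  conv_lhs => enter [2, a, 2, c, 2, t, 2, s]; rw [mul_mul_mul_comm]
  refine Eq.trans (Finset.sum_congr rfl fun a _ => Finset.sum_comm) ?_
  refine Eq.trans Finset.sum_comm ?_
  refine Finset.sum_congr rfl fun t _ => ?_
  refine Eq.trans (Finset.sum_congr rfl fun a _ => Finset.sum_comm) ?_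
  exact Finset.sum_comm

lemma key_block {dd ee ee' : Type*} [Fintype dd] [DecidableEq dd] [Fintype ee]
    [DecidableEq ee] [Fintype ee']
    (Ω : Matrix ee ee ℂ →ₗ[ℂ] Matrix ee' ee' ℂ)
    (N : Matrix (ee × ee') (ee × ee') ℂ)
    (hN : (∑ j, ∑ k, (single j k (1 : ℂ)) ⊗ₖ Ω (single j k 1)) = Nᴴ * N)
    (B : Matrix (dd × ee) (dd × ee) ℂ) (i k : dd) :
    Ω (Matrix.of fun a c => (Bᴴ * B) (i, a) (k, c)) =
      (Matrix.of fun (st : (ee × ee') × (dd × ee)) b => ∑ a, B st.2 (i, a) * N st.1 (a, b))ᴴ *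
      (Matrix.of fun (st : (ee × ee') × (dd × ee)) b => ∑ a, B st.2 (k, a) * N st.1 (a, b)) := by
  ext b b'
  rw [map_expand Ω]
  rw [Matrix.sum_apply]
  have hΩE : ∀ (a c : ee), Ω (single a c 1) b b'
      = ∑ s : ee × ee', (starRingEnd ℂ) (N s (a, b)) * N s (c, b') := by
    intro a c
    rw [← choi_apply Ω a c b b', hN, Matrix.mul_apply]
    simp [Matrix.conjTranspose_apply]
  have hL : ∑ q : ee × ee,
        ((Bᴴ * B) (i, q.1) (k, q.2) • Ω (single q.1 q.2 1)) b b'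
      = ∑ a : ee, ∑ c : ee,
        (∑ t : dd × ee, (starRingEnd ℂ) (B t (i, a)) * B t (k, c)) *
        (∑ s : ee × ee', (starRingEnd ℂ) (N s (a, b)) * N s (c, b')) := by
    rw [Fintype.sum_prod_type]
    refine Finset.sum_congr rfl fun a _ => Finset.sum_congr rfl fun c _ => ?_
    rw [Matrix.smul_apply, hΩE a c, smul_eq_mul]
    congr 1
  simp only [Matrix.of_apply] at hL ⊢
  rw [hL, sum4]
  conv_rhs => rw [Matrix.mul_apply]
  conv_rhs => rw [Fintype.sum_prod_type]
  conv_rhs => rw [Finset.sum_comm]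
  refine Finset.sum_congr rfl fun t _ => Finset.sum_congr rfl fun s _ => ?_
  simp only [Matrix.conjTranspose_apply, Matrix.of_apply, star_sum, star_mul',
    RCLike.star_def]

lemma trace_kron_ctm {m' n' : Type*} [Fintype m'] [Fintype n'] (A C : Matrix m n ℂ)
    (B D : Matrix m' n' ℂ) :
    ((A ⊗ₖ B)ᴴ * (C ⊗ₖ D)).trace = (Aᴴ * C).trace * (Bᴴ * D).trace := by
  rw [kron_conjT, ← Matrix.mul_kronecker_mul, Matrix.trace_kronecker]

lemma kron_decomp {dd ee : Type*} [Fintype dd] [DecidableEq dd] [Fintype ee]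
    (ρ : Matrix (dd × ee) (dd × ee) ℂ) :
    ρ = ∑ p : dd × dd, single p.1 p.2 (1 : ℂ) ⊗ₖ
      (Matrix.of fun a c => ρ (p.1, a) (p.2, c)) := by
  ext ⟨j, a⟩ ⟨l, c⟩
  rw [Matrix.sum_apply, Fintype.sum_prod_type]
  rw [Finset.sum_eq_single j]
  · rw [Finset.sum_eq_single l]
    · simp [Matrix.single]
    · intro k _ hk; simp [Matrix.single, hk]
    · simp
  · intro i _ hi
    apply Finset.sum_eq_zero
    intro k _
    simp [Matrix.single, hi]
  · simp

lemma rankone_psd {dd : Type*} [Fintype dd] (z : dd → ℝ) :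
    (Matrix.of fun i k => ((z i : ℝ) : ℂ) * ((z k : ℝ) : ℂ)).PosSemidef := by
  refine Matrix.PosSemidef.of_dotProduct_mulVec_nonneg ?_ ?_
  · ext i k
    simp only [Matrix.conjTranspose_apply, Matrix.of_apply, star_mul', Complex.star_def,
      Complex.conj_ofReal]
    ring
  · intro v
    set w : ℂ := ∑ k, ((z k : ℝ) : ℂ) * v k with hw
    have hkey : star v ⬝ᵥ (Matrix.of fun i k => ((z i : ℝ) : ℂ) * ((z k : ℝ) : ℂ)) *ᵥ v
        = star w * w := by
      simp only [hw, dotProduct, Matrix.mulVec, Matrix.of_apply, Pi.star_apply, star_sum,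
        star_mul', Complex.star_def, Complex.conj_ofReal, Finset.sum_mul, Finset.mul_sum]
      rw [Finset.sum_comm]
      refine Finset.sum_congr rfl fun i _ => Finset.sum_congr rfl fun k _ => ?_
      ring
    rw [hkey]
    exact star_mul_self_nonneg w

lemma part1 {d d' : ℕ}
    (Φ : Matrix (Fin d) (Fin d) ℂ →ₗ[ℂ] Matrix (Fin d') (Fin d') ℂ)
    (hentries : ∀ (j k : Fin d) (j' k' : Fin d'), 0 ≤ Φ (single j k 1) j' k') :
    ∀ i j k l : Fin d,
      0 ≤ ((Φ (single i k 1))ᴴ * Φ (single j l 1)).trace := by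
  intro i j k l
  rw [trace_ctm]
  refine Finset.sum_nonneg fun q _ => ?_
  have h1 := hentries i k q.1 q.2
  have h2 := hentries j l q.1 q.2
  have him : (Φ (single i k 1) q.1 q.2).im = 0 := by
    have := (Complex.le_def.mp h1).2
    simpa using this.symm
  rw [Complex.conj_eq_iff_im.mpr him]
  exact mul_nonneg h1 h2

lemma main_ub {d d' e e' : ℕ}
    (Φ : Matrix (Fin d) (Fin d) ℂ →ₗ[ℂ] Matrix (Fin d') (Fin d') ℂ)
    (hentries : ∀ (j k : Fin d) (j' k' : Fin d'), 0 ≤ Φ (single j k 1) j' k')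
    (Ω : Matrix (Fin e) (Fin e) ℂ →ₗ[ℂ] Matrix (Fin e') (Fin e') ℂ)
    (N : Matrix (Fin e × Fin e') (Fin e × Fin e') ℂ)
    (hN : (∑ j, ∑ k, (single j k (1 : ℂ)) ⊗ₖ Ω (single j k 1)) = Nᴴ * N)
    (Ψ : Matrix (Fin d × Fin e) (Fin d × Fin e) ℂ →ₗ[ℂ]
        Matrix (Fin d' × Fin e') (Fin d' × Fin e') ℂ)
    (hΨ : ∀ (X : Matrix (Fin d) (Fin d) ℂ) (Bm : Matrix (Fin e) (Fin e) ℂ),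
          Ψ (X ⊗ₖ Bm) = Φ X ⊗ₖ Ω Bm)
    (B : Matrix (Fin d × Fin e) (Fin d × Fin e) ℂ) (htr : (Bᴴ * B).trace = 1) :
    frob (Ψ (Bᴴ * B)) ≤ nu2 Φ * nu2 Ω := by
  classical
  set R : Fin d → Fin d → Matrix (Fin e) (Fin e) ℂ :=
    fun i k => Matrix.of fun a c => (Bᴴ * B) (i, a) (k, c) with hR
  have hRD : ∀ i k, Ω (R i k)
      = (Matrix.of fun (st : (Fin e × Fin e') × (Fin d × Fin e)) b =>
          ∑ a, B st.2 (i, a) * N st.1 (a, b))ᴴ *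
        (Matrix.of fun (st : (Fin e × Fin e') × (Fin d × Fin e)) b =>
          ∑ a, B st.2 (k, a) * N st.1 (a, b)) :=
    fun i k => key_block Ω N hN B i k
  set g : Fin d × Fin d → Fin d × Fin d → ℂ := fun p r =>
    ((Φ (single p.1 p.2 1))ᴴ * Φ (single r.1 r.2 1)).trace with hgdef
  have hg : ∀ p r, 0 ≤ g p r := fun p r => part1 Φ hentries p.1 r.1 p.2 r.2
  have hgre : ∀ p r, 0 ≤ (g p r).re := fun p r => (Complex.le_def.mp (hg p r)).1
  have hgim : ∀ p r, (g p r).im = 0 := fun p r => by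
    have := (Complex.le_def.mp (hg p r)).2; simpa using this.symm
  set x : Fin d × Fin d → ℝ := fun p => frob (Ω (R p.1 p.2)) with hx
  have hxnn : ∀ p, 0 ≤ x p := fun p => frob_nonneg _
  set z : Fin d → ℝ := fun i => Real.sqrt (x (i, i)) with hz
  have hznn : ∀ i, 0 ≤ z i := fun i => Real.sqrt_nonneg _
  have hxz : ∀ p, x p ≤ z p.1 * z p.2 := by
    intro p
    have hsq : x p ^ 2 ≤ x (p.1, p.1) * x (p.2, p.2) := by
      rw [hx]
      simp only [hRD]
      exact gram_cs _ _
    calc x p = Real.sqrt (x p ^ 2) := (Real.sqrt_sq (hxnn p)).symm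
      _ ≤ Real.sqrt (x (p.1, p.1) * x (p.2, p.2)) := Real.sqrt_le_sqrt hsq
      _ = z p.1 * z p.2 := by rw [hz, Real.sqrt_mul (hxnn _)]
  set t : Fin d × Fin d → Fin d × Fin d → ℂ := fun p r =>
    ((Ω (R p.1 p.2))ᴴ * Ω (R r.1 r.2)).trace with htdef
  have htre : ∀ p r, (t p r).re ≤ x p * x r := fun p r =>
    le_trans (Complex.re_le_norm _) (cs_trace _ _)
  have hdecomp : Ψ (Bᴴ * B) = ∑ p : Fin d × Fin d,
      Φ (single p.1 p.2 1) ⊗ₖ Ω (R p.1 p.2) := by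
    conv_lhs => rw [kron_decomp (Bᴴ * B)]
    rw [map_sum]
    exact Finset.sum_congr rfl fun p _ => hΨ _ _
  have hfrobsq : frob (Ψ (Bᴴ * B)) ^ 2 = ∑ p, ∑ r, (g p r).re * (t p r).re := by
    rw [hdecomp, frob_sq, trace_expand_sum]
    rw [Complex.re_sum]
    refine Finset.sum_congr rfl fun p _ => ?_
    rw [Complex.re_sum]
    refine Finset.sum_congr rfl fun r _ => ?_
    rw [trace_kron_ctm, Complex.mul_re, hgim p r]
    simp
    rfl
  set σ : Matrix (Fin d) (Fin d) ℂ :=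
    Matrix.of fun i k => ((z i : ℝ) : ℂ) * ((z k : ℝ) : ℂ) with hσ
  have hσpsd : σ.PosSemidef := rankone_psd z
  have hσfrob : frob (Φ σ) ^ 2
      = ∑ p : Fin d × Fin d, ∑ r : Fin d × Fin d,
        (g p r).re * ((z p.1 * z p.2) * (z r.1 * z r.2)) := by
    rw [map_expand Φ σ, frob_sq, trace_expand_sum, Complex.re_sum]
    refine Finset.sum_congr rfl fun p _ => ?_
    rw [Complex.re_sum]
    refine Finset.sum_congr rfl fun r _ => ?_
    rw [conjTranspose_smul, Matrix.smul_mul, Matrix.mul_smul, Matrix.trace_smul,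
      Matrix.trace_smul]
    simp only [hσ, Matrix.of_apply, smul_eq_mul, ← Complex.ofReal_mul, star_mul',
      Complex.star_def, Complex.conj_ofReal]
    rw [← mul_assoc, ← Complex.ofReal_mul]
    rw [Complex.re_ofReal_mul]
    ring
  have hchain : frob (Ψ (Bᴴ * B)) ^ 2 ≤ frob (Φ σ) ^ 2 := by
    rw [hfrobsq, hσfrob]
    refine Finset.sum_le_sum fun p _ => Finset.sum_le_sum fun r _ => ?_
    refine mul_le_mul_of_nonneg_left ?_ (hgre p r)
    calc (t p r).re ≤ x p * x r := htre p r
      _ ≤ (z p.1 * z p.2) * (z r.1 * z r.2) :=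
        mul_le_mul (hxz p) (hxz r) (hxnn r) (by positivity)
  have hfle : frob (Ψ (Bᴴ * B)) ≤ frob (Φ σ) := by
    have := Real.sqrt_le_sqrt hchain
    rwa [Real.sqrt_sq (frob_nonneg _), Real.sqrt_sq (frob_nonneg _)] at this
  have hσtr : σ.trace.re = ∑ i, x (i, i) := by
    rw [Matrix.trace, Complex.re_sum]
    refine Finset.sum_congr rfl fun i _ => ?_
    simp only [Matrix.diag, hσ, Matrix.of_apply, ← Complex.ofReal_mul, Complex.ofReal_re]
    rw [hz, Real.mul_self_sqrt (hxnn _)]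
  have hRpsd : ∀ i : Fin d, (R i i).PosSemidef := by
    intro i
    have : R i i = (Matrix.of fun (tq : Fin d × Fin e) a => B tq (i, a))ᴴ *
        (Matrix.of fun (tq : Fin d × Fin e) a => B tq (i, a)) := by
      ext a c
      rw [hR]
      simp [Matrix.mul_apply, Matrix.conjTranspose_apply]
    rw [this]
    exact Matrix.posSemidef_conjTranspose_mul_self _
  have hsumtr : ∑ i, ((R i i).trace).re = 1 := by
    have h1 : ∑ i, ((R i i).trace) = (Bᴴ * B).trace := by
      rw [Matrix.trace, Fintype.sum_prod_type]
      refine Finset.sum_congr rfl fun i _ => ?_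
      rw [Matrix.trace]
      rfl
    have := congrArg Complex.re h1
    rw [htr] at this
    rw [← Complex.re_sum, this]
    simp
  have hsum_le : ∑ i, x (i, i) ≤ nu2 Ω := by
    calc ∑ i, x (i, i) ≤ ∑ i, nu2 Ω * ((R i i).trace).re :=
          Finset.sum_le_sum fun i _ => frob_le_nu2 Ω (R i i) (hRpsd i)
      _ = nu2 Ω * ∑ i, ((R i i).trace).re := by rw [Finset.mul_sum]
      _ = nu2 Ω := by rw [hsumtr, mul_one]
  calc frob (Ψ (Bᴴ * B)) ≤ frob (Φ σ) := hfle
    _ ≤ nu2 Φ * σ.trace.re := frob_le_nu2 Φ σ hσpsd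
    _ ≤ nu2 Φ * nu2 Ω := by
        refine mul_le_mul_of_nonneg_left ?_ (nu2_nonneg Φ)
        rw [hσtr]
        exact hsum_le

end helpers

/-- If Φ is completely positive and every entry of every Φ(E_{jk}) is a nonnegative real
number, then Tr Φ(E_{ik})† Φ(E_{jℓ}) ≥ 0 for all indices, and consequently
ν₂(Φ ⊗ Ω) = ν₂(Φ) ν₂(Ω) for every completely positive Ω. -/
theorem stmt8 {d d' : ℕ}
    (Φ : Matrix (Fin d) (Fin d) ℂ →ₗ[ℂ] Matrix (Fin d') (Fin d') ℂ)
    (hΦ : IsCPMap Φ)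
    (hentries : ∀ (j k : Fin d) (j' k' : Fin d'), 0 ≤ Φ (single j k 1) j' k') :
    (∀ i j k l : Fin d,
      0 ≤ ((Φ (single i k 1))ᴴ * Φ (single j l 1)).trace) ∧
    ∀ {e e' : ℕ} (Ω : Matrix (Fin e) (Fin e) ℂ →ₗ[ℂ] Matrix (Fin e') (Fin e') ℂ),
      IsCPMap Ω →
      ∀ Ψ : Matrix (Fin d × Fin e) (Fin d × Fin e) ℂ →ₗ[ℂ]
          Matrix (Fin d' × Fin e') (Fin d' × Fin e') ℂ,
        (∀ (X : Matrix (Fin d) (Fin d) ℂ) (B : Matrix (Fin e) (Fin e) ℂ),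
          Ψ (X ⊗ₖ B) = Φ X ⊗ₖ Ω B) →
        nu2 Ψ = nu2 Φ * nu2 Ω := by
  classical
  refine ⟨part1 Φ hentries, ?_⟩
  intro e e' Ω hΩ Ψ hΨ
  obtain ⟨N, hN⟩ := Matrix.posSemidef_iff_eq_transpose_mul_self.mp hΩ
  have hN' : (∑ j, ∑ k, (single j k (1 : ℂ)) ⊗ₖ Ω (single j k 1)) = Nᴴ * N := hN
  have hub : ∀ r ∈ {r | ∃ ρ : Matrix (Fin d × Fin e) (Fin d × Fin e) ℂ,
      ρ.PosSemidef ∧ ρ.trace = 1 ∧ r = frob (Ψ ρ)}, r ≤ nu2 Φ * nu2 Ω := by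
    rintro r ⟨ρ, hρ, hρtr, rfl⟩
    obtain ⟨B, rfl⟩ := Matrix.posSemidef_iff_eq_transpose_mul_self.mp hρ
    exact main_ub Φ hentries Ω N hN' Ψ hΨ B hρtr
  have hub' : nu2 Ψ ≤ nu2 Φ * nu2 Ω :=
    Real.sSup_le hub (mul_nonneg (nu2_nonneg Φ) (nu2_nonneg Ω))
  refine le_antisymm hub' ?_
  rcases Set.eq_empty_or_nonempty
      {r | ∃ ρ : Matrix (Fin d) (Fin d) ℂ, ρ.PosSemidef ∧ ρ.trace = 1 ∧ r = frob (Φ ρ)}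
    with hE1 | hne1
  · have h0 : nu2 Φ = 0 := by rw [nu2, hE1, Real.sSup_empty]
    rw [h0, zero_mul]; exact nu2_nonneg Ψ
  rcases Set.eq_empty_or_nonempty
      {r | ∃ ρ : Matrix (Fin e) (Fin e) ℂ, ρ.PosSemidef ∧ ρ.trace = 1 ∧ r = frob (Ω ρ)}
    with hE2 | hne2
  · have h0 : nu2 Ω = 0 := by rw [nu2, hE2, Real.sSup_empty]
    rw [h0, mul_zero]; exact nu2_nonneg Ψ
  rcases eq_or_lt_of_le (nu2_nonneg Ω) with hz | hzpos
  · rw [← hz, mul_zero]; exact nu2_nonneg Ψ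
  rw [← le_div_iff₀ hzpos]
  refine csSup_le hne1 ?_
  rintro r1 ⟨ρ1, h1psd, h1tr, rfl⟩
  rw [le_div_iff₀ hzpos]
  rcases eq_or_lt_of_le (frob_nonneg (Φ ρ1)) with hz1 | h1pos
  · rw [← hz1, zero_mul]; exact nu2_nonneg Ψ
  rw [mul_comm, ← le_div_iff₀ h1pos]
  refine csSup_le hne2 ?_
  rintro r2 ⟨ρ2, h2psd, h2tr, rfl⟩
  rw [le_div_iff₀ h1pos]
  have hkronpsd : (ρ1 ⊗ₖ ρ2).PosSemidef := by
    obtain ⟨B1, rfl⟩ := Matrix.posSemidef_iff_eq_transpose_mul_self.mp h1psd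
    obtain ⟨B2, rfl⟩ := Matrix.posSemidef_iff_eq_transpose_mul_self.mp h2psd
    have hk : (B1ᴴ * B1) ⊗ₖ (B2ᴴ * B2) = (B1 ⊗ₖ B2)ᴴ * (B1 ⊗ₖ B2) := by
      rw [kron_conjT, ← Matrix.mul_kronecker_mul]
    rw [hk]
    exact Matrix.posSemidef_conjTranspose_mul_self _
  have hkrontr : (ρ1 ⊗ₖ ρ2).trace = 1 := by
    rw [Matrix.trace_kronecker, h1tr, h2tr, mul_one]
  have hval : frob (Ψ (ρ1 ⊗ₖ ρ2)) = frob (Φ ρ1) * frob (Ω ρ2) := by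
    rw [hΨ, frob_kron]
  have hmem : frob (Φ ρ1) * frob (Ω ρ2) ∈
      {r | ∃ ρ : Matrix (Fin d × Fin e) (Fin d × Fin e) ℂ,
        ρ.PosSemidef ∧ ρ.trace = 1 ∧ r = frob (Ψ ρ)} :=
    ⟨ρ1 ⊗ₖ ρ2, hkronpsd, hkrontr, hval.symm⟩
  calc frob (Ω ρ2) * frob (Φ ρ1) = frob (Φ ρ1) * frob (Ω ρ2) := mul_comm _ _
    _ ≤ nu2 Ψ := le_csSup (nu2_bddAbove Ψ) hmem
end

section
/- Let w, u ∈ ℝ³ and let A = I + ∑_k (w_k + i u_k) σ_k ∈ M₂(ℂ). Then (Tr|A|)² ≥ 4·max(|w|², 1 + |u|²). -/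
open scoped Kronecker ComplexOrder
open Matrix

lemma trace_eq_sum_eig' {n : Type*} [Fintype n] [DecidableEq n] {A : Matrix n n ℂ}
    (h : A.IsHermitian) : A.trace = ∑ i, (h.eigenvalues i : ℂ) := by
  exact h.trace_eq_sum_eigenvalues


/-- For A = I + ∑_k (w_k + i u_k)σ_k one has (Tr|A|)² ≥ 4 · max(|w|², 1 + |u|²). -/
theorem stmt15 (w u : Fin 3 → ℝ) :
    4 * max (∑ k, w k ^ 2) (1 + ∑ k, u k ^ 2) ≤
      schatten 1 (1 + ∑ k, ((w k : ℂ) + Complex.I * (u k : ℂ)) • pauli k) ^ 2 := by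
  set A : Matrix (Fin 2) (Fin 2) ℂ :=
    1 + ∑ k, ((w k : ℂ) + Complex.I * (u k : ℂ)) • pauli k with hAdef
  have hAex : A = !![1 + ((w 2 : ℂ) + Complex.I * u 2),
        ((w 0 : ℂ) + Complex.I * u 0) - Complex.I * ((w 1 : ℂ) + Complex.I * u 1);
      ((w 0 : ℂ) + Complex.I * u 0) + Complex.I * ((w 1 : ℂ) + Complex.I * u 1),
        1 - ((w 2 : ℂ) + Complex.I * u 2)] := by
    rw [hAdef]; ext i j
    fin_cases i <;> fin_cases j <;>
      simp [pauli, Fin.sum_univ_three, Matrix.one_apply] <;> ring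
  have hherm := isHermitian_conjTranspose_mul_self A
  set e := hherm.eigenvalues with he
  have h0 : 0 ≤ e 0 := (posSemidef_conjTranspose_mul_self A).eigenvalues_nonneg 0
  have h1 : 0 ≤ e 1 := (posSemidef_conjTranspose_mul_self A).eigenvalues_nonneg 1
  have htr : e 0 + e 1 = ((Aᴴ * A).trace).re := by
    rw [trace_eq_sum_eig' hherm]; simp [Fin.sum_univ_two, he]
  have hdet : e 0 * e 1 = ((Aᴴ * A).det).re := by
    rw [hherm.det_eq_prod_eigenvalues]
    simp [Fin.prod_univ_two, Complex.mul_re, he]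
  have hdet2 : ((Aᴴ * A).det).re = Complex.normSq A.det := by
    simp [Matrix.det_conjTranspose, Complex.normSq_apply, Complex.mul_re, mul_comm]
  have hs : schatten 1 A ^ 2 = ((Aᴴ * A).trace).re + 2 * ‖A.det‖ := by
    have hss : schatten 1 A = Real.sqrt (e 0) + Real.sqrt (e 1) := by
      simp [schatten, Fin.sum_univ_two, he]
    rw [hss, add_sq, Real.sq_sqrt h0, Real.sq_sqrt h1, mul_assoc, ← Real.sqrt_mul h0, hdet, hdet2,
      ← Complex.norm_def]
    linarith
  have htrv : ((Aᴴ * A).trace).re = 2 * (1 + (∑ k, w k ^ 2) + ∑ k, u k ^ 2) := by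
    rw [hAex]
    simp [Matrix.trace, Matrix.mul_apply, Fin.sum_univ_two, conjTranspose_apply,
      Fin.sum_univ_three, Complex.ext_iff]
    ring
  have hdre : (A.det).re = 1 - (∑ k, w k ^ 2) + ∑ k, u k ^ 2 := by
    rw [hAex]
    simp [Matrix.det_fin_two_of, Fin.sum_univ_three, Complex.ext_iff]
    ring
  have habs : |(A.det).re| ≤ ‖A.det‖ := Complex.abs_re_le_norm _
  rw [hs, htrv]
  rcases max_cases (∑ k, w k ^ 2) (1 + ∑ k, u k ^ 2) with ⟨hm, hc⟩ | ⟨hm, hc⟩ <;> rw [hm] <;>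
    [nlinarith [neg_abs_le (A.det).re]; nlinarith [le_abs_self (A.det).re]]
end
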